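/- Let σ be a permutation of the vertex set of a tree G such that every vertex k in the support of σ satisfies that the term Π_k (xI - A(G))_{k,σ(k)} is nonzero as a polynomial. Then σ is a product of disjoint transpositions, each transposition corresponding to an edge of G. Consequently, in the Leibniz expansion of det(xI - A(G)) for a forest G, only permutations that are products of disjoint transpositions along edges contribute. -/

import Mathlib

open Function

/-- Auxiliary walk: `k, σ k, σ² k, …, σ^i k` along edges of `G`. -/
noncomputable def iterWalk {V : Type*} (G : SimpleGraph V) (σ : Equiv.Perm V) (k : V)
    (h : ∀ j, σ j ≠ j → G.Adj j (σ j)) (hk : σ k ≠ k) :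
    (i : ℕ) → G.Walk k ((σ ^ i) k)
  | 0 => SimpleGraph.Walk.nil
  | (i + 1) => (iterWalk G σ k h hk i).concat (by
      have hne : σ ((σ ^ i) k) ≠ (σ ^ i) k := by
        intro hfix
        exact hk ((σ ^ i).injective (by
          have : (σ ^ i) (σ k) = (σ ^ i) k := by
            have := hfix
            calc (σ ^ i) (σ k) = ((σ ^ i) * σ) k := rfl
              _ = (σ * (σ ^ i)) k := by rw [Commute.self_pow σ i]
              _ = σ ((σ ^ i) k) := rfl
              _ = (σ ^ i) k := hfix
          exact this))
      have : G.Adj ((σ ^ i) k) (σ ((σ ^ i) k)) := h _ hne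
      have heq : σ ((σ ^ i) k) = (σ ^ (i + 1)) k := by
        rw [pow_succ']; rfl
      rw [heq] at this
      exact this)

theorem iterWalk_support {V : Type*} (G : SimpleGraph V) (σ : Equiv.Perm V) (k : V)
    (h : ∀ j, σ j ≠ j → G.Adj j (σ j)) (hk : σ k ≠ k) (i : ℕ) :
    (iterWalk G σ k h hk i).support = (List.range (i + 1)).map (fun j => (σ ^ j) k) := by
  induction i with
  | zero =>
      show [k] = List.map (fun j => (σ ^ j) k) (List.range 1)
      simp [List.range_succ]
  | succ n ih =>
      rw [iterWalk, SimpleGraph.Walk.support_concat, ih,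
        List.range_succ (n := n + 1), List.map_append]
      simp

theorem iterWalk_length {V : Type*} (G : SimpleGraph V) (σ : Equiv.Perm V) (k : V)
    (h : ∀ j, σ j ≠ j → G.Adj j (σ j)) (hk : σ k ≠ k) (i : ℕ) :
    (iterWalk G σ k h hk i).length = i := by
  induction i with
  | zero => rfl
  | succ n ih => rw [iterWalk, SimpleGraph.Walk.length_concat, ih]

/-- In the Leibniz expansion of `det (xI - A(G))` for a forest `G`, a
permutation `σ` contributes a nonzero term only if every non-fixed point `k`
satisfies `G.Adj k (σ k)`.  Any such permutation is a product of disjoint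
transpositions along edges of `G`; in particular it is an involution. -/
theorem forest_leibniz_involution {V : Type*} [Fintype V] (G : SimpleGraph V)
    (hG : G.IsAcyclic) (σ : Equiv.Perm V)
    (h : ∀ k, σ k ≠ k → G.Adj k (σ k)) :
    ∀ k, σ (σ k) = k := by
  intro k
  by_cases hk : σ k = k
  · rw [hk, hk]
  by_contra hkk
  -- `k` is a periodic point of `σ`
  have hfin : IsOfFinOrder σ := isOfFinOrder_of_finite σ
  have hpos : 0 < orderOf σ := hfin.orderOf_pos
  have hper : k ∈ periodicPts σ := by
    refine mk_mem_periodicPts hpos ?_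
    show σ^[orderOf σ] k = k
    rw [Equiv.Perm.iterate_eq_pow, pow_orderOf_eq_one]
    rfl
  set n := minimalPeriod σ k with hn
  have hinj := iterate_injOn_Iio_minimalPeriod (f := (σ : V → V)) (x := k)
  have hn1 : n ≠ 1 := by
    intro h1
    apply hk
    have := isPeriodicPt_minimalPeriod σ k
    rw [← hn] at this
    rw [h1] at this
    exact this
  have hn2 : n ≠ 2 := by
    intro h2
    apply hkk
    have := isPeriodicPt_minimalPeriod σ k
    rw [← hn, h2] at this
    exact this
  have hnpos : 0 < n := minimalPeriod_pos_of_mem_periodicPts hper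
  have hn3 : 3 ≤ n := by omega
  -- build the long path from `k` to `σ ^ (n-1) k`
  have hsupp := iterWalk_support G σ k h hk (n - 1)
  have hnodup : (iterWalk G σ k h hk (n - 1)).support.Nodup := by
    rw [hsupp]
    refine List.Nodup.map_on ?_ List.nodup_range
    intro a ha b hb hab
    rw [List.mem_range] at ha hb
    have ha' : a ∈ Set.Iio n := by simp; omega
    have hb' : b ∈ Set.Iio n := by simp; omega
    exact hinj ha' hb' (by simpa [Equiv.Perm.iterate_eq_pow] using hab)
  let p1 : G.Path k ((σ ^ (n - 1)) k) := ⟨iterWalk G σ k h hk (n - 1), by rw [SimpleGraph.Walk.isPath_def]; exact hnodup⟩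
  -- the short path: single edge from `σ ^ (n-1) k` back to `k`
  have hlast : σ ((σ ^ (n - 1)) k) = k := by
    have : (σ ^ n) k = k := isPeriodicPt_minimalPeriod σ k
    calc σ ((σ ^ (n - 1)) k) = (σ ^ (n - 1 + 1)) k := by rw [pow_succ']; rfl
      _ = (σ ^ n) k := by rw [show n - 1 + 1 = n by omega]
      _ = k := this
  have hne2 : (σ ^ (n - 1)) k ≠ k := by
    intro heq
    have h0 : (0 : ℕ) ∈ Set.Iio n := by simp; omega
    have h1 : n - 1 ∈ Set.Iio n := by simp; omega
    have := hinj h1 h0 (by simpa [Equiv.Perm.iterate_eq_pow] using heq)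
    omega
  have hadj : G.Adj k ((σ ^ (n - 1)) k) := by
    have := h ((σ ^ (n - 1)) k) (by rw [hlast]; exact fun e => hne2 e.symm)
    rw [hlast] at this
    exact this.symm
  let p2 : G.Path k ((σ ^ (n - 1)) k) := SimpleGraph.Path.singleton hadj
  have := hG.path_unique p1 p2
  have hlen : (p1 : G.Walk k ((σ ^ (n - 1)) k)).length
      = (p2 : G.Walk k ((σ ^ (n - 1)) k)).length := by rw [this]
  rw [iterWalk_length] at hlen
  simp [p2, SimpleGraph.Path.singleton] at hlen
  omega
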